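/- Let θ = (θ₁,…,θₙ) ∈ ℝⁿ be such that 1, θ₁, …, θₙ are linearly independent over ℤ. If η ∈ ℝⁿ satisfies inf { ‖m·η‖ : m is a best approximation to θ with respect to the weights j₁,…,jₙ } > 0, then η ∈ Bad_θ(j₁,…,jₙ). -/

import Mathlib

open scoped BigOperators

/-- Distance from a real number to the nearest integer. -/
noncomputable def nearInt (x : ℝ) : ℝ := |x - round x|

/-- The height `M_m = max_i |m_i|^(1/j_i)` of an integer vector. -/
noncomputable def height (n : ℕ) (j : Fin n → ℝ) (m : Fin n → ℤ) : ℝ :=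
  ⨆ i, (|m i| : ℝ) ^ (1 / j i)

/-- `m ∈ ℤⁿ \ {0}` is a best approximation to `θ` with respect to the weights `j`. -/
def IsBestApprox (n : ℕ) (j θ : Fin n → ℝ) (m : Fin n → ℤ) : Prop :=
  m ≠ 0 ∧ ∀ v : Fin n → ℤ, v ≠ 0 → v ≠ m → v ≠ -m →
    height n j v ≤ height n j m →
    nearInt (∑ i, (m i : ℝ) * θ i) < nearInt (∑ i, (v i : ℝ) * θ i)

/-- `1, θ₁, …, θₙ` are linearly independent over `ℤ`. -/
def ZLinIndep (n : ℕ) (θ : Fin n → ℝ) : Prop :=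
  ∀ (a₀ : ℤ) (a : Fin n → ℤ), (a₀ : ℝ) + ∑ i, (a i : ℝ) * θ i = 0 → a₀ = 0 ∧ a = 0

/-- The twisted badly approximable set `Bad_θ(j₁,…,jₙ)`. -/
def BadTheta (n : ℕ) (j θ : Fin n → ℝ) : Set (Fin n → ℝ) :=
  {η | ∃ c > 0, ∀ q : ℕ, 0 < q →
    c ≤ ⨆ i, (q : ℝ) ^ (j i) * nearInt ((q : ℝ) * θ i - η i)}


lemma nearInt_nonneg (x : ℝ) : 0 ≤ nearInt x := abs_nonneg _

lemma nearInt_le_abs_sub_int (x : ℝ) (k : ℤ) : nearInt x ≤ |x - k| := by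
  rcases eq_or_ne k (round x) with h | h
  · simp [nearInt, h]
  · have h1 : (1:ℝ) ≤ |(round x : ℝ) - k| := by
      have h0 : round x - k ≠ 0 := sub_ne_zero.2 (Ne.symm h)
      have := Int.one_le_abs h0
      calc (1:ℝ) ≤ (|round x - k| : ℤ) := by exact_mod_cast this
        _ = |(round x : ℝ) - k| := by push_cast; ring_nf
    have h2 : |x - round x| ≤ 1/2 := abs_sub_round x
    have h3 : |(round x : ℝ) - k| ≤ |x - k| + |x - round x| := by
      have : (round x : ℝ) - k = (x - k) - (x - round x) := by ring
      rw [this]; exact abs_sub _ _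
    simp only [nearInt]; linarith

lemma nearInt_le_half (x : ℝ) : nearInt x ≤ 1/2 := abs_sub_round x

lemma nearInt_add_le (x y : ℝ) : nearInt (x + y) ≤ nearInt x + nearInt y := by
  have := nearInt_le_abs_sub_int (x + y) (round x + round y)
  refine this.trans ?_
  have : x + y - (↑(round x + round y) : ℝ) = (x - round x) + (y - round y) := by push_cast; ring
  rw [this]; exact (abs_add_le _ _).trans (le_refl _)

lemma nearInt_neg (x : ℝ) : nearInt (-x) = nearInt x := by
  have h1 := nearInt_le_abs_sub_int (-x) (-(round x))
  have h2 := nearInt_le_abs_sub_int x (-(round (-x)))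
  have e1 : |(-x) - (↑(-(round x)) : ℝ)| = |x - round x| := by push_cast; rw [← abs_neg]; ring_nf
  have e2 : |x - (↑(-(round (-x))) : ℝ)| = |(-x) - round (-x)| := by push_cast; rw [← abs_neg]; ring_nf
  simp only [nearInt] at *
  rw [e1] at h1; rw [e2] at h2; linarith

lemma nearInt_int_mul (k : ℤ) (x : ℝ) : nearInt (k * x) ≤ |(k:ℝ)| * nearInt x := by
  have := nearInt_le_abs_sub_int (k * x) (k * round x)
  refine this.trans ?_
  have : (k:ℝ) * x - (↑(k * round x) : ℝ) = (k:ℝ) * (x - round x) := by push_cast; ring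
  rw [this, abs_mul]; exact le_refl _

lemma nearInt_le_abs (x : ℝ) : nearInt x ≤ |x| := by
  simpa using nearInt_le_abs_sub_int x 0

lemma nearInt_eq_zero {x : ℝ} (h : nearInt x = 0) : ∃ k : ℤ, x = k := by
  exact ⟨round x, by have := abs_eq_zero.1 h; linarith⟩

lemma nearInt_eq_cases {a b : ℝ} (h : nearInt a = nearInt b) :
    (∃ k : ℤ, a - b = k) ∨ (∃ k : ℤ, a + b = k) := by
  rcases abs_eq_abs.1 h with h' | h'
  · left; exact ⟨round a - round b, by push_cast; linarith⟩
  · right; exact ⟨round a + round b, by push_cast; linarith⟩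

lemma nearInt_sum_le {n : ℕ} (f : Fin n → ℝ) :
    nearInt (∑ i, f i) ≤ ∑ i, nearInt (f i) := by
  have := nearInt_le_abs_sub_int (∑ i, f i) (∑ i, round (f i))
  refine this.trans ?_
  have : (∑ i, f i) - (↑(∑ i, round (f i)) : ℝ) = ∑ i, (f i - round (f i)) := by
    push_cast; rw [Finset.sum_sub_distrib]
  rw [this]
  exact (Finset.abs_sum_le_sum_abs _ _).trans (le_refl _)


lemma floor_eq_abs_lt {a b : ℝ} (h : ⌊a⌋ = ⌊b⌋) : |a - b| < 1 := by
  have ha1 := Int.lt_floor_add_one a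
  have ha2 := Int.floor_le a
  have hb1 := Int.lt_floor_add_one b
  have hb2 := Int.floor_le b
  rw [h] at ha1 ha2
  rw [abs_lt]; constructor <;> linarith

lemma dirichlet (n : ℕ) (hn : 1 ≤ n) (θ j : Fin n → ℝ)
    (hj : ∀ i, 0 < j i) (hsum : ∑ i, j i = 1) (N : ℝ) (hN : 1 ≤ N) :
    ∃ v : Fin n → ℤ, v ≠ 0 ∧ (∀ i, |v i| ≤ ⌊N ^ (j i)⌋) ∧
      nearInt (∑ i, (v i : ℝ) * θ i) < 1 / (⌊N⌋₊ : ℝ) := by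
  have hNpos : (0:ℝ) < N := lt_of_lt_of_le one_pos hN
  have hQ : 1 ≤ ⌊N⌋₊ := Nat.le_floor (by exact_mod_cast hN)
  have hQR : (0:ℝ) < (⌊N⌋₊ : ℝ) := by exact_mod_cast hQ
  set Q := ⌊N⌋₊ with hQdef
  set S := Fintype.piFinset (fun i : Fin n => Finset.Icc (0:ℤ) ⌊N ^ (j i)⌋) with hS
  -- card bound
  have hcard : Q < S.card := by
    have h1 : (S.card : ℝ) = ∏ i, ((⌊N ^ (j i)⌋ : ℝ) + 1) := by
      rw [hS, Fintype.card_piFinset, Nat.cast_prod]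
      refine Finset.prod_congr rfl (fun i _ => ?_)
      rw [Int.card_Icc, sub_zero]
      have h0 : (0:ℤ) ≤ ⌊N ^ (j i)⌋ := Int.floor_nonneg.2 (Real.rpow_nonneg hNpos.le _)
      have e := Int.toNat_of_nonneg (a := ⌊N ^ (j i)⌋ + 1) (by omega)
      exact_mod_cast congrArg (Int.cast : ℤ → ℝ) e
    have h2 : N < (S.card : ℝ) := by
      have he : N = ∏ i, N ^ (j i) := by
        rw [← Real.rpow_sum_of_pos hNpos, hsum, Real.rpow_one]
      have key : ∏ i, N ^ (j i) < ∏ i, ((⌊N ^ (j i)⌋ : ℝ) + 1) := by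
        refine Finset.prod_lt_prod_of_nonempty ?_ ?_ ?_
        · intro i _; exact Real.rpow_pos_of_pos hNpos _
        · intro i _; exact Int.lt_floor_add_one _
        · exact Finset.univ_nonempty_iff.2 (Fin.pos_iff_nonempty.1 hn)
      rw [h1]; exact he ▸ (he ▸ key)
    have h3 : (Q : ℝ) ≤ N := Nat.floor_le hNpos.le
    exact_mod_cast lt_of_le_of_lt h3 h2
  -- pigeonhole map
  set g : (Fin n → ℤ) → ℝ := fun v => ∑ i, (v i : ℝ) * θ i with hg
  set f : (Fin n → ℤ) → ℕ := fun v => (⌊Int.fract (g v) * Q⌋).toNat with hf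
  have hmaps : ∀ v ∈ S, f v ∈ Finset.range Q := by
    intro v _
    simp only [Finset.mem_range, hf]
    have h0 : (0:ℝ) ≤ Int.fract (g v) := Int.fract_nonneg _
    have h1 : Int.fract (g v) < 1 := Int.fract_lt_one _
    have : Int.fract (g v) * Q < Q := by nlinarith
    have hfl : ⌊Int.fract (g v) * Q⌋ < (Q : ℤ) := Int.floor_lt.2 (by exact_mod_cast this)
    omega
  obtain ⟨v, hvS, w, hwS, hvw, hfvw⟩ :=
    Finset.exists_ne_map_eq_of_card_lt_of_maps_to (by simpa using hcard) hmaps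
  refine ⟨v - w, sub_ne_zero.2 hvw, ?_, ?_⟩
  · intro i
    have hv := Fintype.mem_piFinset.1 hvS i
    have hw := Fintype.mem_piFinset.1 hwS i
    rw [Finset.mem_Icc] at hv hw
    simp only [Pi.sub_apply]
    rw [abs_le]; omega
  · -- the norm estimate
    have hfloor : ⌊Int.fract (g v) * Q⌋ = ⌊Int.fract (g w) * Q⌋ := by
      have h0 : (0:ℝ) ≤ Int.fract (g v) * Q := mul_nonneg (Int.fract_nonneg _) hQR.le
      have h0' : (0:ℝ) ≤ Int.fract (g w) * Q := mul_nonneg (Int.fract_nonneg _) hQR.le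
      have e1 : ((⌊Int.fract (g v) * Q⌋).toNat : ℤ) = ⌊Int.fract (g v) * Q⌋ :=
        Int.toNat_of_nonneg (Int.floor_nonneg.2 h0)
      have e2 : ((⌊Int.fract (g w) * Q⌋).toNat : ℤ) = ⌊Int.fract (g w) * Q⌋ :=
        Int.toNat_of_nonneg (Int.floor_nonneg.2 h0')
      simp only [hf] at hfvw
      omega
    have hlt : |Int.fract (g v) - Int.fract (g w)| < 1 / Q := by
      have := floor_eq_abs_lt hfloor
      have e : Int.fract (g v) * Q - Int.fract (g w) * Q
          = (Int.fract (g v) - Int.fract (g w)) * Q := by ring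
      rw [e, abs_mul, abs_of_pos hQR] at this
      rw [lt_div_iff₀ hQR]; linarith [this]
    have hsum2 : (∑ i, ((v - w) i : ℝ) * θ i) = g v - g w := by
      simp only [hg, Pi.sub_apply]
      push_cast
      rw [← Finset.sum_sub_distrib]
      refine Finset.sum_congr rfl (fun i _ => by ring)
    rw [hsum2]
    have hdec : g v - g w = (Int.fract (g v) - Int.fract (g w)) + (⌊g v⌋ - ⌊g w⌋ : ℤ) := by
      simp only [Int.fract]; push_cast; ring
    calc nearInt (g v - g w) ≤ |g v - g w - ((⌊g v⌋ - ⌊g w⌋ : ℤ) : ℝ)| :=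
          nearInt_le_abs_sub_int _ _
      _ = |Int.fract (g v) - Int.fract (g w)| := by rw [hdec]; push_cast; ring_nf
      _ < 1 / Q := hlt

section
variable (n : ℕ) (θ j : Fin n → ℝ)

lemma height_le (hn : 1 ≤ n) (hj : ∀ i, 0 < j i) (N : ℝ) (hN : 0 < N) (v : Fin n → ℤ)
    (h : ∀ i, (|v i| : ℝ) ≤ N ^ (j i)) : height n j v ≤ N := by
  haveI : Nonempty (Fin n) := Fin.pos_iff_nonempty.1 hn
  refine ciSup_le ?_
  intro i
  have h1 : (|v i| : ℝ) ^ (1 / j i) ≤ (N ^ (j i)) ^ (1 / j i) :=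
    Real.rpow_le_rpow (by positivity) (h i) (one_div_pos.2 (hj i)).le
  rwa [← Real.rpow_mul hN.le, mul_one_div_cancel (hj i).ne', Real.rpow_one] at h1

lemma le_of_height_le (hj : ∀ i, 0 < j i) (N : ℝ) (hN : 0 < N) (v : Fin n → ℤ)
    (h : height n j v ≤ N) (i : Fin n) : (|v i| : ℝ) ≤ N ^ (j i) := by
  have h1 : (|v i| : ℝ) ^ (1 / j i) ≤ height n j v :=
    le_ciSup (f := fun i => (|v i| : ℝ) ^ (1 / j i))
      (Set.Finite.bddAbove (Set.finite_range _)) i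
  have h2 : ((|v i| : ℝ) ^ (1 / j i)) ^ (j i) ≤ N ^ (j i) :=
    Real.rpow_le_rpow (by positivity) (h1.trans h) (hj i).le
  rwa [← Real.rpow_mul (by positivity), one_div_mul_cancel (hj i).ne', Real.rpow_one] at h2

lemma exists_best (hn : 1 ≤ n) (hj : ∀ i, 0 < j i) (hsum : ∑ i, j i = 1)
    (hθ : ZLinIndep n θ) (N : ℝ) (hN : 1 ≤ N) :
    ∃ m : Fin n → ℤ, IsBestApprox n j θ m ∧ (∀ i, (|m i| : ℝ) ≤ N ^ (j i)) ∧
      nearInt (∑ i, (m i : ℝ) * θ i) < 1 / (⌊N⌋₊ : ℝ) := by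
  have hNpos : (0:ℝ) < N := lt_of_lt_of_le one_pos hN
  set T := (Fintype.piFinset (fun i : Fin n =>
      Finset.Icc (-⌊N ^ (j i)⌋) ⌊N ^ (j i)⌋)).erase 0 with hT
  have hmemT : ∀ v : Fin n → ℤ, v ∈ T ↔ (v ≠ 0 ∧ ∀ i, (|v i| : ℝ) ≤ N ^ (j i)) := by
    intro v
    rw [hT, Finset.mem_erase, Fintype.mem_piFinset]
    constructor
    · rintro ⟨h0, h1⟩
      refine ⟨h0, fun i => ?_⟩
      have := h1 i; rw [Finset.mem_Icc] at this
      have habs : |v i| ≤ ⌊N ^ (j i)⌋ := by rw [abs_le]; omega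
      calc (|v i| : ℝ) ≤ (⌊N ^ (j i)⌋ : ℝ) := by exact_mod_cast habs
        _ ≤ N ^ (j i) := Int.floor_le _
    · rintro ⟨h0, h1⟩
      refine ⟨h0, fun i => ?_⟩
      rw [Finset.mem_Icc]
      have habs : |v i| ≤ ⌊N ^ (j i)⌋ := Int.le_floor.2 (by exact_mod_cast h1 i)
      rw [abs_le] at habs; omega
  obtain ⟨v₀, hv₀, hv₀box, hv₀near⟩ := dirichlet n hn θ j hj hsum N hN
  have hv₀T : v₀ ∈ T := by
    rw [hmemT]
    refine ⟨hv₀, fun i => ?_⟩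
    calc (|v₀ i| : ℝ) ≤ (⌊N ^ (j i)⌋ : ℝ) := by exact_mod_cast hv₀box i
      _ ≤ N ^ (j i) := Int.floor_le _
  obtain ⟨m, hmT, hmin⟩ := Finset.exists_min_image T
    (fun v => nearInt (∑ i, (v i : ℝ) * θ i)) ⟨v₀, hv₀T⟩
  have hmBox := (hmemT m).1 hmT
  refine ⟨m, ⟨hmBox.1, ?_⟩, hmBox.2, lt_of_le_of_lt (hmin v₀ hv₀T) hv₀near⟩
  intro v hv0 hvm hvm' hh
  have hvT : v ∈ T := by
    rw [hmemT]
    refine ⟨hv0, fun i => ?_⟩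
    have hm_le : height n j m ≤ N := height_le n j hn hj N hNpos m hmBox.2
    exact le_of_height_le n j hj N hNpos v (hh.trans hm_le) i
  have hle := hmin v hvT
  rcases lt_or_eq_of_le hle with h | h
  · exact h
  · exfalso
    rcases nearInt_eq_cases h with ⟨k, hk⟩ | ⟨k, hk⟩
    · have hcomb : ((-k : ℤ) : ℝ) + ∑ i, ((m i - v i : ℤ) : ℝ) * θ i = 0 := by
        push_cast
        have e : ∑ x, ((m x : ℝ) - (v x : ℝ)) * θ x
            = ∑ i, (m i : ℝ) * θ i - ∑ i, (v i : ℝ) * θ i := by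
          rw [← Finset.sum_sub_distrib]
          exact Finset.sum_congr rfl (fun i _ => by ring)
        rw [e]; linarith
      have hz := hθ (-k) (fun i => m i - v i) hcomb
      apply hvm; funext i
      have h2 := congrFun hz.2 i
      simp only [Pi.zero_apply] at h2
      omega
    · have hcomb : ((-k : ℤ) : ℝ) + ∑ i, ((m i + v i : ℤ) : ℝ) * θ i = 0 := by
        push_cast
        have e : ∑ x, ((m x : ℝ) + (v x : ℝ)) * θ x
            = ∑ i, (m i : ℝ) * θ i + ∑ i, (v i : ℝ) * θ i := by
          rw [← Finset.sum_add_distrib]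
          exact Finset.sum_congr rfl (fun i _ => by ring)
        rw [e]; linarith
      have hz := hθ (-k) (fun i => m i + v i) hcomb
      apply hvm'; funext i
      have h2 := congrFun hz.2 i
      simp only [Pi.zero_apply] at h2
      simp only [Pi.neg_apply]
      omega
end


theorem statement11 (n : ℕ) (hn : 1 ≤ n) (θ j : Fin n → ℝ)
    (hj : ∀ i, 0 < j i) (hsum : ∑ i, j i = 1) (hθ : ZLinIndep n θ)
    (η : Fin n → ℝ)
    (hη : ∃ c > 0, ∀ m : Fin n → ℤ, IsBestApprox n j θ m →
      c ≤ nearInt (∑ i, (m i : ℝ) * η i)) :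
    η ∈ BadTheta n j θ := by
  obtain ⟨c₀, hc₀, hbest⟩ := hη
  set c := min c₀ (1/2) with hcdef
  have hcpos : 0 < c := lt_min hc₀ (by norm_num)
  have hc2 : c ≤ 1/2 := min_le_right _ _
  have hn' : (0:ℝ) < n := by exact_mod_cast hn
  have hj1 : ∀ i, j i ≤ 1 := fun i =>
    hsum ▸ Finset.single_le_sum (fun i _ => (hj i).le) (Finset.mem_univ i)
  by_contra hbad
  simp only [BadTheta, Set.mem_setOf_eq] at hbad
  push_neg at hbad
  set ε := c ^ 2 / (16 * n) with hεdef
  have hεpos : 0 < ε := by positivity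
  obtain ⟨q, hq, hsup⟩ := hbad ε hεpos
  have hq1 : (1:ℝ) ≤ (q:ℝ) := by exact_mod_cast hq
  have hqpos : (0:ℝ) < (q:ℝ) := by linarith
  set N := 4 * q / c with hNdef
  have hN8 : (8:ℝ) ≤ N := by
    rw [hNdef, le_div_iff₀ hcpos]; nlinarith
  have hN1 : (1:ℝ) ≤ N := by linarith
  have hNpos : (0:ℝ) < N := by linarith
  obtain ⟨m, hmBA, hmbox, hmnear⟩ := exists_best n θ j hn hj hsum hθ N hN1
  have hlow : c ≤ nearInt (∑ i, (m i : ℝ) * η i) :=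
    le_trans (min_le_left _ _) (hbest m hmBA)
  -- per-coordinate smallness
  have hsup_i : ∀ i, nearInt ((q : ℝ) * θ i - η i) < ε / (q : ℝ) ^ (j i) := by
    intro i
    have hqp : (0:ℝ) < (q : ℝ) ^ (j i) := Real.rpow_pos_of_pos hqpos _
    have h1 : (q : ℝ) ^ (j i) * nearInt ((q : ℝ) * θ i - η i)
        ≤ ⨆ i, (q : ℝ) ^ (j i) * nearInt ((q : ℝ) * θ i - η i) :=
      le_ciSup (f := fun i => (q : ℝ) ^ (j i) * nearInt ((q : ℝ) * θ i - η i))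
        (Set.Finite.bddAbove (Set.finite_range _)) i
    rw [lt_div_iff₀ hqp, mul_comm]
    exact lt_of_le_of_lt h1 hsup
  -- second term
  have hQR : (0:ℝ) < (⌊N⌋₊ : ℝ) := by
    have := Nat.sub_one_lt_floor N; linarith
  have hfl : 1 / (⌊N⌋₊ : ℝ) ≤ 2 / N := by
    have h1 : N - 1 < (⌊N⌋₊ : ℝ) := Nat.sub_one_lt_floor N
    have h2 : N / 2 ≤ N - 1 := by linarith
    rw [div_le_div_iff₀ hQR hNpos]; nlinarith
  have hterm2 : nearInt ((q : ℝ) * ∑ i, (m i : ℝ) * θ i) < c / 2 := by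
    have h1 : nearInt ((q : ℝ) * ∑ i, (m i : ℝ) * θ i)
        ≤ (q : ℝ) * nearInt (∑ i, (m i : ℝ) * θ i) := by
      have := nearInt_int_mul (q : ℤ) (∑ i, (m i : ℝ) * θ i)
      push_cast at this
      simpa [abs_of_pos hqpos] using this
    have h2 : (q : ℝ) * nearInt (∑ i, (m i : ℝ) * θ i) < (q : ℝ) * (2 / N) := by
      exact mul_lt_mul_of_pos_left (lt_of_lt_of_le hmnear hfl) hqpos
    have h3 : (q : ℝ) * (2 / N) = c / 2 := by
      rw [hNdef]; field_simp; ring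
    linarith
  -- first term
  have hterm1 : ∑ i, nearInt ((m i : ℝ) * (η i - (q : ℝ) * θ i)) ≤ c / 4 := by
    have hper : ∀ i, nearInt ((m i : ℝ) * (η i - (q : ℝ) * θ i)) ≤ ε * (4 / c) := by
      intro i
      have h1 : nearInt ((m i : ℝ) * (η i - (q : ℝ) * θ i))
          ≤ (|m i| : ℝ) * nearInt (η i - (q : ℝ) * θ i) := by
        have := nearInt_int_mul (m i) (η i - (q : ℝ) * θ i)
        push_cast at this ⊢
        exact this
      have h2 : nearInt (η i - (q : ℝ) * θ i) = nearInt ((q : ℝ) * θ i - η i) := by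
        rw [show η i - (q : ℝ) * θ i = -((q : ℝ) * θ i - η i) by ring, nearInt_neg]
      rw [h2] at h1
      have h3 : (|m i| : ℝ) * nearInt ((q : ℝ) * θ i - η i)
          ≤ N ^ (j i) * (ε / (q : ℝ) ^ (j i)) := by
        refine mul_le_mul (hmbox i) (hsup_i i).le (nearInt_nonneg _) ?_
        exact (Real.rpow_pos_of_pos hNpos _).le
      have h4 : N ^ (j i) * (ε / (q : ℝ) ^ (j i)) = ε * (N / q) ^ (j i) := by
        rw [Real.div_rpow hNpos.le hqpos.le]; ring
      have h5 : (N / q) ^ (j i) ≤ 4 / c := by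
        have hNq : N / q = 4 / c := by rw [hNdef]; field_simp
        rw [hNq]
        have h41 : (1:ℝ) ≤ 4 / c := by
          rw [le_div_iff₀ hcpos]; linarith
        calc (4 / c) ^ (j i) ≤ (4 / c) ^ (1:ℝ) :=
              Real.rpow_le_rpow_of_exponent_le h41 (hj1 i)
          _ = 4 / c := Real.rpow_one _
      calc nearInt ((m i : ℝ) * (η i - (q : ℝ) * θ i))
          ≤ N ^ (j i) * (ε / (q : ℝ) ^ (j i)) := h1.trans h3
        _ = ε * (N / q) ^ (j i) := h4
        _ ≤ ε * (4 / c) := by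
            exact mul_le_mul_of_nonneg_left h5 hεpos.le
    calc ∑ i, nearInt ((m i : ℝ) * (η i - (q : ℝ) * θ i))
        ≤ ∑ _i : Fin n, ε * (4 / c) := Finset.sum_le_sum (fun i _ => hper i)
      _ = n * (ε * (4 / c)) := by
          rw [Finset.sum_const, Finset.card_univ, Fintype.card_fin, nsmul_eq_mul]
      _ = c / 4 := by
          rw [hεdef]; field_simp; ring
  -- decomposition
  have hdec : ∑ i, (m i : ℝ) * η i
      = (∑ i, (m i : ℝ) * (η i - (q : ℝ) * θ i)) + (q : ℝ) * ∑ i, (m i : ℝ) * θ i := by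
    rw [Finset.mul_sum, ← Finset.sum_add_distrib]
    exact Finset.sum_congr rfl (fun i _ => by ring)
  have hfinal : nearInt (∑ i, (m i : ℝ) * η i) < c := by
    calc nearInt (∑ i, (m i : ℝ) * η i)
        ≤ nearInt (∑ i, (m i : ℝ) * (η i - (q : ℝ) * θ i))
          + nearInt ((q : ℝ) * ∑ i, (m i : ℝ) * θ i) := by
          rw [hdec]; exact nearInt_add_le _ _
      _ ≤ (∑ i, nearInt ((m i : ℝ) * (η i - (q : ℝ) * θ i)))
          + nearInt ((q : ℝ) * ∑ i, (m i : ℝ) * θ i) := by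
          exact add_le_add_left (nearInt_sum_le _) _
      _ < c / 4 + c / 2 := by
          exact add_lt_add_of_le_of_lt hterm1 hterm2
      _ < c := by linarith
  linarith
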